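/- Let A be a finite group acting on a finite set Ω, G a normal subgroup of A with A/G cyclic generated by xG. Then (1/|G|) · Σ_{g ∈ xG} |Fix(g)| equals the number of orbits of A on Ω that are also orbits of G on Ω (the common (A,G)-orbits). -/

import Mathlib

open MulAction
open scoped Classical

/-- `(1/|G|) Σ_{g ∈ xG} |Fix g|` equals the number of common `(A,G)`-orbits
on `Ω`, i.e. the sum of fixed point counts over the coset `xG` equals `|G|` times the
number of `A`-orbits that are also `G`-orbits. -/




lemma key_card {A Ω : Type*} [Group A] [Fintype A] [Fintype Ω] [MulAction A Ω]
    (G : Subgroup A) [G.Normal] (x : A)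
    (hgen : ∀ a : A, ∃ k : ℤ,
      (QuotientGroup.mk a : A ⧸ G) = (QuotientGroup.mk x : A ⧸ G) ^ k) (ω : Ω) :
    (Finset.univ.filter (fun a : A => x⁻¹ * a ∈ G ∧ a • ω = ω)).card =
      if orbit A ω = orbit G ω then Nat.card (stabilizer G ω) else 0 := by
  by_cases hcom : orbit A ω = orbit G ω
  · rw [if_pos hcom]
    have hx : x • ω ∈ orbit G ω := hcom ▸ mem_orbit ω x
    obtain ⟨g, hg⟩ := hx
    simp only [Submonoid.smul_def] at hg
    set a₀ : A := (g : A)⁻¹ * x with ha₀def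
    have ha₀G : x⁻¹ * a₀ ∈ G := by
      have h1 : x⁻¹ * (g : A)⁻¹ * (x⁻¹)⁻¹ ∈ G :=
        Subgroup.Normal.conj_mem ‹G.Normal› _ (inv_mem g.2) x⁻¹
      have h2 : x⁻¹ * a₀ = x⁻¹ * (g : A)⁻¹ * (x⁻¹)⁻¹ := by
        rw [ha₀def, inv_inv, mul_assoc]
      rwa [h2]
    have hg' : (g : A) • ω = x • ω := hg
    have ha₀ω : a₀ • ω = ω := by
      rw [mul_smul, ← hg', inv_smul_smul]
    -- bijection
    have : Nat.card {a : A // x⁻¹ * a ∈ G ∧ a • ω = ω} = Nat.card (stabilizer G ω) := by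
      apply Nat.card_congr
      refine ⟨fun a => ⟨⟨a₀⁻¹ * a.1, ?_⟩, ?_⟩, fun h => ⟨a₀ * ((h : G) : A), ?_, ?_⟩, ?_, ?_⟩
      · have : a₀⁻¹ * a.1 = (x⁻¹ * a₀)⁻¹ * (x⁻¹ * a.1) := by group
        rw [this]; exact mul_mem (inv_mem ha₀G) a.2.1
      · rw [mem_stabilizer_iff, Submonoid.smul_def]
        show (a₀⁻¹ * a.1) • ω = ω
        rw [mul_smul, a.2.2, inv_smul_eq_iff, ha₀ω]
      · have : x⁻¹ * (a₀ * ((h : G) : A)) = (x⁻¹ * a₀) * ((h : G) : A) := by group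
        rw [this]; exact mul_mem ha₀G ((h : G)).2
      · have hst : ((h : G) : A) • ω = ω := by
          have := h.2; rw [mem_stabilizer_iff] at this
          exact this
        rw [mul_smul, hst, ha₀ω]
      · intro a; ext; simp
      · intro h; ext; simp
    rw [← this, Nat.card_eq_fintype_card, Fintype.card_subtype]
  · rw [if_neg hcom, Finset.card_eq_zero, Finset.filter_eq_empty_iff]
    rintro a - ⟨haG, haω⟩
    exfalso; apply hcom
    have hstab : a ∈ stabilizer A ω := mem_stabilizer_iff.mpr haω
    apply Set.Subset.antisymm
    · rintro b' ⟨b, rfl⟩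
      obtain ⟨k, hk⟩ := hgen b
      have hxa : (QuotientGroup.mk x : A ⧸ G) = QuotientGroup.mk a := by
        rw [QuotientGroup.eq]; exact haG
      have hbk : (a ^ k)⁻¹ * b ∈ G := by
        rw [← QuotientGroup.eq]
        rw [hk, hxa, ← QuotientGroup.mk_zpow]
      have hak : (a ^ k) • ω = ω := (stabilizer A ω).zpow_mem hstab k
      have hconj : a ^ k * ((a ^ k)⁻¹ * b) * (a ^ k)⁻¹ ∈ G :=
        Subgroup.Normal.conj_mem ‹G.Normal› _ hbk (a ^ k)
      refine ⟨⟨a ^ k * ((a ^ k)⁻¹ * b) * (a ^ k)⁻¹, hconj⟩, ?_⟩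
      show (a ^ k * ((a ^ k)⁻¹ * b) * (a ^ k)⁻¹) • ω = b • ω
      have h2 : a ^ k * ((a ^ k)⁻¹ * b) * (a ^ k)⁻¹ = b * (a ^ k)⁻¹ := by group
      have h3 : (a ^ k)⁻¹ • ω = ω := by rw [inv_smul_eq_iff, hak]
      rw [h2, mul_smul, h3]
    · exact orbit_subgroup_subset G ω


lemma orbit_sum_stab {A Ω : Type*} [Group A] [Fintype A] [Fintype Ω] [MulAction A Ω]
    (G : Subgroup A) (O : Set Ω) (ω₀ : Ω) (hG : O = orbit G ω₀) :
    ∑ ω ∈ O.toFinset, Nat.card (stabilizer G ω) = Nat.card G := by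
  have horb : ∀ ω ∈ O.toFinset, orbit G ω = O := by
    intro ω hω
    rw [Set.mem_toFinset, hG] at hω
    rw [hG]
    exact MulAction.orbit_eq_iff.mpr hω
  have hos : ∀ ω ∈ O.toFinset, O.toFinset.card * Nat.card (stabilizer G ω) = Nat.card G := by
    intro ω hω
    have := MulAction.card_orbit_mul_card_stabilizer_eq_card_group G ω
    rw [← Nat.card_eq_fintype_card, ← Nat.card_eq_fintype_card, ← Nat.card_eq_fintype_card] at this
    rw [← this, horb ω hω]
    congr 1
    rw [Nat.card_eq_card_toFinset]
  have hne : ω₀ ∈ O.toFinset := by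
    rw [Set.mem_toFinset, hG]; exact mem_orbit_self ω₀
  have hpos : 0 < O.toFinset.card := Finset.card_pos.mpr ⟨ω₀, hne⟩
  have hconst : ∀ ω ∈ O.toFinset, Nat.card (stabilizer G ω) = Nat.card (stabilizer G ω₀) :=
    fun ω hω => Nat.eq_of_mul_eq_mul_left hpos ((hos ω hω).trans (hos ω₀ hne).symm)
  rw [Finset.sum_congr rfl hconst, Finset.sum_const, smul_eq_mul, hos ω₀ hne]

theorem sum_fixed_points_coset_eq_card_common_orbits
    (A Ω : Type*) [Group A] [Fintype A] [Fintype Ω] [Nonempty Ω] [MulAction A Ω]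
    (G : Subgroup A) [G.Normal] (x : A)
    (hgen : ∀ a : A, ∃ k : ℤ,
      (QuotientGroup.mk a : A ⧸ G) = (QuotientGroup.mk x : A ⧸ G) ^ k) :
    ∑ a : A, (if x⁻¹ * a ∈ G then Set.ncard {ω : Ω | a • ω = ω} else 0) =
      Nat.card G *
        Set.ncard {O : Set Ω | ∃ ω : Ω, O = MulAction.orbit A ω ∧ O = MulAction.orbit G ω} := by
  classical
  -- Step 1: turn LHS into ∑ ω, card of coset stabilizer
  have step1 : ∑ a : A, (if x⁻¹ * a ∈ G then Set.ncard {ω : Ω | a • ω = ω} else 0) =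
      ∑ ω : Ω, (Finset.univ.filter (fun a : A => x⁻¹ * a ∈ G ∧ a • ω = ω)).card := by
    have h1 : ∀ a : A, (if x⁻¹ * a ∈ G then Set.ncard {ω : Ω | a • ω = ω} else 0) =
        ∑ ω : Ω, (if x⁻¹ * a ∈ G ∧ a • ω = ω then 1 else 0) := by
      intro a
      by_cases h : x⁻¹ * a ∈ G
      · simp only [h, if_true, true_and]
        rw [Set.ncard_eq_toFinset_card', Set.toFinset_setOf, Finset.card_filter]
      · simp [h]
    simp only [h1]
    rw [Finset.sum_comm]
    congr 1; ext ω
    rw [Finset.card_filter]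
  rw [step1]
  have step2 : ∀ ω : Ω, (Finset.univ.filter (fun a : A => x⁻¹ * a ∈ G ∧ a • ω = ω)).card =
      if orbit A ω = orbit G ω then Nat.card (stabilizer G ω) else 0 :=
    key_card G x hgen
  simp only [step2]
  rw [← Finset.sum_filter]
  -- Step 3: fiberwise over orbits
  set s : Finset Ω := Finset.univ.filter (fun ω => orbit A ω = orbit G ω) with hs
  set t : Finset (Set Ω) :=
    Finset.univ.filter (fun O : Set Ω => ∃ ω : Ω, O = orbit A ω ∧ O = orbit G ω) with ht
  have hmaps : ∀ ω ∈ s, orbit A ω ∈ t := by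
    intro ω hω
    rw [hs, Finset.mem_filter] at hω
    rw [ht, Finset.mem_filter]
    exact ⟨Finset.mem_univ _, ω, rfl, hω.2⟩
  rw [← Finset.sum_fiberwise_of_maps_to hmaps (fun ω => Nat.card (stabilizer G ω))]
  have hfiber : ∀ O ∈ t,
      (∑ ω ∈ s.filter (fun ω => orbit A ω = O), Nat.card (stabilizer G ω)) = Nat.card G := by
    intro O hO
    rw [ht, Finset.mem_filter] at hO
    obtain ⟨-, ω₀, hA0, hG0⟩ := hO
    have hfib : s.filter (fun ω => orbit A ω = O) = O.toFinset := by
      ext ω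
      simp only [Finset.mem_filter, hs, Finset.mem_univ, true_and, Set.mem_toFinset]
      constructor
      · rintro ⟨-, h2⟩; rw [← h2]; exact mem_orbit_self ω
      · intro hω
        have hωG : ω ∈ orbit G ω₀ := hG0 ▸ hω
        have hωA : ω ∈ orbit A ω₀ := hA0 ▸ hω
        have e1 : orbit A ω = orbit A ω₀ := MulAction.orbit_eq_iff.mpr hωA
        have e2 : orbit G ω = orbit G ω₀ := MulAction.orbit_eq_iff.mpr hωG
        refine ⟨?_, by rw [e1, ← hA0]⟩
        rw [e1, e2, ← hA0, ← hG0]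
    rw [hfib]
    exact orbit_sum_stab G O ω₀ hG0
  rw [Finset.sum_congr rfl hfiber, Finset.sum_const, smul_eq_mul, mul_comm]
  congr 1
  rw [Set.ncard_eq_toFinset_card', Set.toFinset_setOf]
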